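/- For every integer $d \ge 1$, the identity $\sum_{t+k+m+n=d,\ t,k,m,n\ge 0} (-1)^n \dfrac{v^{t^2 - 2dt + t + 2nt + \binom{n+1}{2} - 2km - 2m}}{[n]!\,[2k]^{!!}\,[2m]^{!!}} (v - v^{-1})^t = 0$ holds in $\mathbb{Q}(v)$. -/

import Mathlib

noncomputable section

abbrev K : Type := RatFunc ℚ

/-- The indeterminate `v` in `ℚ(v)`. -/
def v : K := RatFunc.X

/-- Quantum integer `[m] = (v^m - v^{-m})/(v - v^{-1})`. -/
def qint (m : ℤ) : K := (v ^ m - v ^ (-m)) / (v - v⁻¹)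

/-- Quantum factorial `[r]! = ∏_{i=1}^r [i]`. -/
def qfact (r : ℕ) : K := ∏ i ∈ Finset.range r, qint ((i : ℤ) + 1)

/-- Quantum double factorial `[2r]!! = ∏_{i=1}^r [2i]`. -/
def qdfact (r : ℕ) : K := ∏ i ∈ Finset.range r, qint (2 * ((i : ℤ) + 1))

/-- Balanced Gaussian binomial coefficient `[m][m-1]⋯[m-r+1]/[r]!`. -/
def qbinom (m : ℤ) (r : ℕ) : K := (∏ i ∈ Finset.range r, qint (m - (i : ℤ))) / qfact r

/-- Gaussian binomial with integer lower index, vanishing for negative lower index. -/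
def qbinomZ (m r : ℤ) : K := if 0 ≤ r then qbinom m r.toNat else 0


lemma hv : v ≠ 0 := RatFunc.X_ne_zero

lemma vpow_nat_ne_one (n : ℕ) (hn : 0 < n) : (v:K)^n ≠ 1 := by
  intro h
  have h2 : algebraMap (Polynomial ℚ) K (Polynomial.X ^ n) = algebraMap (Polynomial ℚ) K 1 := by
    simpa [v, map_pow, RatFunc.algebraMap_X] using h
  have h3 := RatFunc.algebraMap_injective ℚ h2
  have h4 := Polynomial.natDegree_X_pow (R := ℚ) n
  rw [h3] at h4
  simp at h4
  omega

lemma vzpow_eq_one {n : ℤ} (h : v ^ n = 1) : n = 0 := by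
  rcases lt_trichotomy n 0 with hlt | he | hgt
  · have h1 : v ^ (-n) = 1 := by
      rw [zpow_neg, h]; simp
    have hn : (-n) = ((-n).toNat : ℤ) := by omega
    rw [hn, zpow_natCast] at h1
    exact absurd h1 (vpow_nat_ne_one _ (by omega))
  · exact he
  · have hn : n = (n.toNat : ℤ) := by omega
    rw [hn, zpow_natCast] at h
    exact absurd h (vpow_nat_ne_one _ (by omega))

lemma vzpow_ne_zero (n : ℤ) : v ^ n ≠ 0 := zpow_ne_zero n hv

lemma hsub : v - v⁻¹ ≠ 0 := by
  intro h
  have h1 : v = v⁻¹ := by linear_combination h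
  have h2 : v ^ (2:ℤ) = 1 := by
    rw [show (2:ℤ) = 1 + 1 by norm_num, zpow_add₀ hv]
    simp only [zpow_one]
    nth_rewrite 2 [h1]
    exact mul_inv_cancel₀ hv
  have := vzpow_eq_one h2
  omega

lemma qint_zero : qint 0 = 0 := by simp [qint]

lemma qint_ne_zero {m : ℤ} (hm : m ≠ 0) : qint m ≠ 0 := by
  unfold qint
  apply div_ne_zero _ hsub
  intro h
  have h1 : v ^ m = v ^ (-m) := by linear_combination h
  have h2 : v ^ (2*m) = 1 := by
    rw [two_mul, zpow_add₀ hv]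
    nth_rewrite 1 [h1]
    rw [← zpow_add₀ hv, neg_add_cancel, zpow_zero]
  have := vzpow_eq_one h2
  omega

lemma qfact_succ (r : ℕ) : qfact (r+1) = qfact r * qint (r+1) := by
  unfold qfact
  rw [Finset.prod_range_succ]

lemma qdfact_succ (r : ℕ) : qdfact (r+1) = qdfact r * qint (2*(r+1)) := by
  unfold qdfact
  rw [Finset.prod_range_succ]

lemma qfact_ne_zero (r : ℕ) : qfact r ≠ 0 := by
  unfold qfact
  rw [Finset.prod_ne_zero_iff]
  intro i _
  exact qint_ne_zero (by omega)

lemma qdfact_ne_zero (r : ℕ) : qdfact r ≠ 0 := by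
  unfold qdfact
  rw [Finset.prod_ne_zero_iff]
  intro i _
  exact qint_ne_zero (by omega)

lemma qadd (x y : ℤ) : qint (x+y) = v^y * qint x + v^(-x) * qint y := by
  unfold qint
  rw [← mul_div_assoc, ← mul_div_assoc, ← add_div]
  congr 1
  rw [neg_add, zpow_add₀ hv, zpow_add₀ hv]
  ring

lemma hvi : v⁻¹ ≠ 0 := inv_ne_zero hv
lemma vnat (n : ℕ) : v ^ ((n:ℤ)) = v ^ n := zpow_natCast v n
lemma vneg (n : ℕ) : v ^ (-(n:ℤ)) = (v⁻¹) ^ n := by rw [zpow_neg, vnat, inv_pow]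
lemma qint_decomp (x : ℤ) : qint x * (v - v⁻¹) = v^x - v^(-x) :=
  div_mul_cancel₀ _ hsub
lemma qint_decompN (n : ℕ) : qint (n : ℤ) * (v - v⁻¹) = v^n - (v⁻¹)^n := by
  rw [qint_decomp, vnat, vneg]
lemma vvp (n : ℕ) : v^n * v⁻¹^n = 1 := by
  rw [← mul_pow, mul_inv_cancel₀ hv, one_pow]
lemma vv (a b c d : ℕ) (h : a + d = c + b) : v^a * v⁻¹^b = v^c * v⁻¹^d := by
  rw [inv_pow, inv_pow, ← div_eq_mul_inv, ← div_eq_mul_inv,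
      div_eq_div_iff (pow_ne_zero _ hv) (pow_ne_zero _ hv), ← pow_add, ← pow_add, h]

-- triangular numbers
def triN (r : ℕ) : ℕ := r*(r-1)/2
def tribN (n : ℕ) : ℕ := n*(n+1)/2
def wN (s : ℕ) : ℕ := s*(s+3)/2

lemma tribN_succ (n : ℕ) : tribN (n+1) = tribN n + (n+1) := by
  unfold tribN
  rw [show (n+1)*(n+1+1) = n*(n+1) + 2*(n+1) by ring,
    Nat.add_mul_div_left _ _ (by norm_num : 0 < 2)]

lemma triN_succ (r : ℕ) : triN (r+1) = tribN r := by
  unfold triN tribN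
  congr 1
  simp [Nat.mul_comm]

lemma tribN_eq_triN (r : ℕ) : tribN r = triN r + r := by
  cases r with
  | zero => rfl
  | succ n => rw [tribN_succ, triN_succ]

lemma two_tribN (n : ℕ) : 2 * tribN n = n*(n+1) := by
  unfold tribN
  rw [Nat.two_mul_div_two_of_even]
  exact (Nat.even_mul_succ_self n)

lemma wN_eq (s : ℕ) : wN s = tribN s + s := by
  unfold wN tribN
  rw [show s*(s+3) = s*(s+1) + 2*s by ring, Nat.add_mul_div_left _ _ (by norm_num : 0 < 2)]

lemma wN_succ (s : ℕ) : wN (s+1) = wN s + (s+2) := by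
  rw [wN_eq, wN_eq, tribN_succ]; ring

lemma wN_add_tribN (s : ℕ) : wN s + tribN s = s^2 + 2*s := by
  have h1 := two_tribN s
  have h2 := wN_eq s
  have h3 : s*(s+1) = s^2 + s := by ring
  rw [h3] at h1
  linarith

-- part functions (all ℕ-powers)
def Ff (k : ℕ) : K := v ^ (k^2) / qdfact k
def Gg (m : ℕ) : K := v ^ (m^2) / (v^(2*m) * qdfact m)
def Tt (t : ℕ) : K := v ^ t * (v - v⁻¹)^t
def Hh (n : ℕ) : K := (-1:K)^n * v ^ (tribN n) / qfact n
def Ee (r : ℕ) : K := v ^ (triN r) / qfact r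
def Ww (s : ℕ) : K := v ^ (wN s) / qfact s
def Wpp (s : ℕ) : K := v ^ (2*s) * (v⁻¹) ^ (tribN s) / qfact s

lemma Wpp_eq (s : ℕ) : Wpp s = (v⁻¹) ^ (s^2) * Ww s := by
  unfold Wpp Ww
  have key : v ^ (2*s) * (v⁻¹) ^ (tribN s) = v ^ (wN s) * (v⁻¹) ^ (s^2) := by
    apply vv
    have := wN_add_tribN s
    omega
  rw [key]
  ring

lemma pA1 (k : ℕ) : qint (2*((k:ℤ)+1)) * Ff (k+1) = v^(2*k+1) * Ff k := by
  unfold Ff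
  rw [qdfact_succ]
  have h1 : qint (2*((k:ℤ)+1)) ≠ 0 := qint_ne_zero (by omega)
  have h2 : qdfact k ≠ 0 := qdfact_ne_zero k
  have h3 : (k+1)^2 = (2*k+1) + k^2 := by ring
  rw [h3, pow_add]
  field_simp

lemma pA2 (m : ℕ) : qint (2*((m:ℤ)+1)) * Gg (m+1) = v^(2*m) * v⁻¹ * Gg m := by
  unfold Gg
  rw [qdfact_succ]
  have h1 : qint (2*((m:ℤ)+1)) ≠ 0 := qint_ne_zero (by omega)
  have h2 : qdfact m ≠ 0 := qdfact_ne_zero m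
  have h3 : (m+1)^2 = (2*m+1) + m^2 := by ring
  have h4 : 2*(m+1) = (2*m) + 2 := by ring
  rw [h3, h4, pow_add, pow_add]
  have h5 : v ^ (2*m) ≠ 0 := pow_ne_zero _ hv
  have hv' : v ≠ 0 := hv
  field_simp
  ring

lemma FG_swap (k m : ℕ) : Ff k * Gg m = v^(2*k) * (v⁻¹)^(2*m) * (Ff m * Gg k) := by
  unfold Ff Gg
  have h2 : qdfact m ≠ 0 := qdfact_ne_zero m
  have h3 : qdfact k ≠ 0 := qdfact_ne_zero k
  have h5 : v ^ (2*m) ≠ 0 := pow_ne_zero _ hv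
  have h6 : v ^ (2*k) ≠ 0 := pow_ne_zero _ hv
  have hv' : v ≠ 0 := hv
  field_simp
  ring
  rw [← mul_pow, mul_inv_cancel₀ hv, one_pow]

lemma core1 (r : ℕ) : qint (2*((r:ℤ)+1)) * v^r = (v^(2*r+1) + v⁻¹) * qint ((r:ℤ)+1) := by
  apply mul_right_cancel₀ (b := v - v⁻¹) hsub
  rw [mul_assoc, mul_comm (v^r) (v-v⁻¹), ← mul_assoc, qint_decomp,
      mul_assoc, qint_decomp]
  rw [show -(2*((r:ℤ)+1)) = -((2*r+2 : ℕ) : ℤ) by push_cast; ring, vneg]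
  rw [show -((r:ℤ)+1) = -((r+1 : ℕ) : ℤ) by push_cast; ring, vneg]
  rw [show (2*((r:ℤ)+1)) = ((2*r+2 : ℕ) : ℤ) by push_cast; ring, vnat]
  rw [show ((r:ℤ)+1) = ((r+1 : ℕ) : ℤ) by push_cast; ring, vnat]
  linear_combination (-1:K) * (vv r (2*r+2) 0 (r+2) (by omega)) +
    vv (2*r+1) (r+1) r 0 (by omega) - vv (r+1) 1 r 0 (by omega)

lemma pE (r : ℕ) : qint (2*((r:ℤ)+1)) * Ee (r+1) = (v^(2*r+1) + v⁻¹) * Ee r := by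
  unfold Ee
  rw [qfact_succ, triN_succ, tribN_eq_triN, pow_add]
  have h4 : qint ((r:ℤ)+1) ≠ 0 := qint_ne_zero (by omega)
  have step : qint (2*((r:ℤ)+1)) * (v^(triN r) * v^r / (qfact r * qint ((r:ℤ)+1)))
      = (v^(triN r)/qfact r) * ((qint (2*((r:ℤ)+1)) * v^r) * (qint ((r:ℤ)+1))⁻¹) := by
    ring
  rw [step, core1, mul_assoc, mul_inv_cancel₀ h4, mul_one]
  ring

lemma pB (s : ℕ) : v * (v - v⁻¹) * Ww s + Ee (s+1) = Ww (s+1) := by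
  have h2 : qfact s ≠ 0 := qfact_ne_zero s
  have h4 : qint ((s:ℤ)+1) ≠ 0 := qint_ne_zero (by omega)
  have hd : qint ((s:ℤ)+1) * (v - v⁻¹) = v^(s+1) - (v⁻¹)^(s+1) := by
    have := qint_decompN (s+1)
    rwa [show (((s:ℕ)+1:ℕ):ℤ) = (s:ℤ)+1 by push_cast; ring] at this
  have key : v*(v-v⁻¹)*(v^(wN s))*qint ((s:ℤ)+1) + v^(triN (s+1)) = v^(wN (s+1)) := by
    rw [triN_succ, wN_succ, wN_eq]
    calc v*(v-v⁻¹)*(v^(tribN s + s))*qint ((s:ℤ)+1) + v^(tribN s)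
        = v * (qint ((s:ℤ)+1)*(v-v⁻¹)) * (v^(tribN s) * v^s) + v^(tribN s) := by
          rw [pow_add]; ring
      _ = v^(tribN s + s + (s+2)) := by
          rw [hd, pow_add, pow_add]
          linear_combination (-(v^(tribN s)) : K) * vvp (s+1)
  unfold Ww Ee
  rw [qfact_succ]
  have expand : v*(v-v⁻¹)*(v^(wN s)/qfact s) + v^(triN (s+1))/(qfact s * qint ((s:ℤ)+1))
      = (v*(v-v⁻¹)*(v^(wN s))*qint ((s:ℤ)+1) + v^(triN (s+1)))/(qfact s * qint ((s:ℤ)+1)) := by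
    field_simp
  rw [expand, key]

lemma pH (n : ℕ) : qint ((n:ℤ)+1) * Hh (n+1) = -(v^(n+1)) * Hh n := by
  unfold Hh
  rw [qfact_succ, tribN_succ, pow_add, pow_succ]
  have h2 : qfact n ≠ 0 := qfact_ne_zero n
  have h4 : qint ((n:ℤ)+1) ≠ 0 := qint_ne_zero (by omega)
  field_simp
  ring

lemma pW (s : ℕ) : qint ((s:ℤ)+1) * Wpp (s+1) = v * (v⁻¹)^s * Wpp s := by
  unfold Wpp
  rw [qfact_succ, tribN_succ]
  have h2 : qfact s ≠ 0 := qfact_ne_zero s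
  have h4 : qint ((s:ℤ)+1) ≠ 0 := qint_ne_zero (by omega)
  have h5 : 2*(s+1) = 2*s + 2 := by ring
  rw [h5, pow_add, pow_add]
  have hv' : v ≠ 0 := hv
  field_simp
  ring
  rw [mul_inv_cancel₀ hv, one_mul]

lemma tri_reindex (f : ℕ → ℕ → K) : ∀ M : ℕ,
    ∑ k ∈ Finset.range (M+1), ∑ m ∈ Finset.range (M+1-k), f k m
      = ∑ r ∈ Finset.range (M+1), ∑ k ∈ Finset.range (r+1), f k (r-k) := by
  intro M
  induction M with
  | zero => simp
  | succ M ih =>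
    have hb : ∀ k ∈ Finset.range (M+2), ∑ m ∈ Finset.range (M+2-k), f k m
        = ∑ m ∈ Finset.range (M+1-k), f k m + f k (M+1-k) := by
      intro k hk
      have hk' : k ≤ M+1 := by
        have := Finset.mem_range.mp hk; omega
      have h : M+2-k = (M+1-k)+1 := by omega
      rw [h, Finset.sum_range_succ]
    calc ∑ k ∈ Finset.range (M+1+1), ∑ m ∈ Finset.range (M+1+1-k), f k m
        = ∑ k ∈ Finset.range (M+2), (∑ m ∈ Finset.range (M+1-k), f k m + f k (M+1-k)) :=
          Finset.sum_congr rfl hb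
      _ = ∑ k ∈ Finset.range (M+2), ∑ m ∈ Finset.range (M+1-k), f k m
            + ∑ k ∈ Finset.range (M+2), f k (M+1-k) := Finset.sum_add_distrib
      _ = ∑ k ∈ Finset.range (M+1), ∑ m ∈ Finset.range (M+1-k), f k m
            + ∑ k ∈ Finset.range (M+2), f k (M+1-k) := by
          rw [Finset.sum_range_succ (fun k => ∑ m ∈ Finset.range (M+1-k), f k m) (M+1)]
          simp
      _ = ∑ r ∈ Finset.range (M+1), ∑ k ∈ Finset.range (r+1), f k (r-k)
            + ∑ k ∈ Finset.range (M+1+1), f k (M+1-k) := by rw [ih]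
      _ = ∑ r ∈ Finset.range (M+1+1), ∑ k ∈ Finset.range (r+1), f k (r-k) := by
          rw [Finset.sum_range_succ (fun r => ∑ k ∈ Finset.range (r+1), f k (r-k)) (M+1)]

lemma lemA : ∀ r : ℕ, ∑ k ∈ Finset.range (r+1), Ff k * Gg (r-k) = Ee r := by
  intro r
  induction r with
  | zero => simp [Ff, Gg, Ee, qdfact, qfact, triN]
  | succ r ih =>
    have hq : qint (2*((r:ℤ)+1)) ≠ 0 := qint_ne_zero (by omega)
    apply mul_left_cancel₀ hq
    rw [Finset.mul_sum]
    have split : ∀ k ∈ Finset.range (r+2),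
        qint (2*((r:ℤ)+1)) * (Ff k * Gg (r+1-k))
          = v^(2*(r+1-k)) * qint (2*(k:ℤ)) * Ff k * Gg (r+1-k)
            + (v⁻¹)^(2*k) * qint (2*((r+1-k:ℕ):ℤ)) * Ff k * Gg (r+1-k) := by
      intro k hk
      have hk' : k ≤ r+1 := by have := Finset.mem_range.mp hk; omega
      have e : (2*((r:ℤ)+1)) = (2*(k:ℤ)) + (2*((r+1-k:ℕ):ℤ)) := by
        have : ((r+1-k:ℕ):ℤ) = (r:ℤ)+1-(k:ℤ) := by omega
        rw [this]; ring
      rw [e, qadd]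
      rw [show (2*((r+1-k:ℕ):ℤ)) = ((2*(r+1-k):ℕ):ℤ) by push_cast; ring, vnat]
      rw [show -(2*(k:ℤ)) = -((2*k:ℕ):ℤ) by push_cast; ring, vneg]
      ring
    rw [Finset.sum_congr rfl split, Finset.sum_add_distrib]
    have S1 : ∑ k ∈ Finset.range (r+2), v^(2*(r+1-k)) * qint (2*(k:ℤ)) * Ff k * Gg (r+1-k)
        = v^(2*r+1) * ∑ k ∈ Finset.range (r+1), Ff k * Gg (r-k) := by
      rw [Finset.sum_range_succ']
      have f0 : v^(2*(r+1-0)) * qint (2*((0:ℕ):ℤ)) * Ff 0 * Gg (r+1-0) = 0 := by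
        norm_num [qint_zero]
      rw [f0, add_zero, Finset.mul_sum]
      apply Finset.sum_congr rfl
      intro k hk
      have hk' : k ≤ r := by have := Finset.mem_range.mp hk; omega
      have h1 : r+1-(k+1) = r-k := by omega
      have h2 : (2*(((k:ℕ)+1:ℕ)):ℤ) = 2*((k:ℤ)+1) := by push_cast; ring
      rw [h1, h2]
      calc v^(2*(r-k)) * qint (2*((k:ℤ)+1)) * Ff (k+1) * Gg (r-k)
          = v^(2*(r-k)) * (qint (2*((k:ℤ)+1)) * Ff (k+1)) * Gg (r-k) := by ring
        _ = v^(2*(r-k)) * (v^(2*k+1) * Ff k) * Gg (r-k) := by rw [pA1]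
        _ = v^(2*(r-k)) * v^(2*k+1) * (Ff k * Gg (r-k)) := by ring
        _ = v^(2*r+1) * (Ff k * Gg (r-k)) := by
            rw [← pow_add, show 2*(r-k)+(2*k+1) = 2*r+1 by omega]
    have S2 : ∑ k ∈ Finset.range (r+2), (v⁻¹)^(2*k) * qint (2*((r+1-k:ℕ):ℤ)) * Ff k * Gg (r+1-k)
        = v⁻¹ * ∑ k ∈ Finset.range (r+1), Ff k * Gg (r-k) := by
      rw [Finset.sum_range_succ]
      have flast : (v⁻¹)^(2*(r+1)) * qint (2*((r+1-(r+1):ℕ):ℤ)) * Ff (r+1) * Gg (r+1-(r+1)) = 0 := by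
        norm_num [qint_zero]
      rw [flast, add_zero]
      have step : ∀ k ∈ Finset.range (r+1),
          (v⁻¹)^(2*k) * qint (2*((r+1-k:ℕ):ℤ)) * Ff k * Gg (r+1-k)
            = (v⁻¹)^(2*k) * v^(2*(r-k)) * v⁻¹ * (Ff k * Gg (r-k)) := by
        intro k hk
        have hk' : k ≤ r := by have := Finset.mem_range.mp hk; omega
        have h1 : r+1-k = (r-k)+1 := by omega
        have h2 : (2*((((r-k):ℕ)+1:ℕ)):ℤ) = 2*(((r-k):ℕ):ℤ)+2 := by push_cast; ring
        rw [h1]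
        calc (v⁻¹)^(2*k) * qint (2*(((r-k)+1:ℕ):ℤ)) * Ff k * Gg ((r-k)+1)
            = (v⁻¹)^(2*k) * (qint (2*((((r-k):ℕ):ℤ)+1)) * Gg ((r-k)+1)) * Ff k := by
              rw [show (2*(((r-k)+1:ℕ):ℤ)) = 2*((((r-k):ℕ):ℤ)+1) by push_cast; ring]
              ring
          _ = (v⁻¹)^(2*k) * (v^(2*(r-k)) * v⁻¹ * Gg (r-k)) * Ff k := by rw [pA2]
          _ = (v⁻¹)^(2*k) * v^(2*(r-k)) * v⁻¹ * (Ff k * Gg (r-k)) := by ring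
      rw [Finset.sum_congr rfl step]
      rw [← Finset.sum_range_reflect]
      rw [Finset.mul_sum]
      apply Finset.sum_congr rfl
      intro k hk
      have hk' : k ≤ r := by have := Finset.mem_range.mp hk; omega
      have h1 : r+1-1-k = r-k := by omega
      have h2 : r-(r-k) = k := by omega
      rw [h1, h2]
      calc (v⁻¹)^(2*(r-k)) * v^(2*k) * v⁻¹ * (Ff (r-k) * Gg k)
          = (v⁻¹)^(2*(r-k)) * v^(2*k) * v⁻¹ *
              (v^(2*(r-k)) * (v⁻¹)^(2*k) * (Ff k * Gg (r-k))) := by rw [← FG_swap]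
        _ = (v^(2*k) * v⁻¹^(2*k)) * (v^(2*(r-k)) * v⁻¹^(2*(r-k))) * (v⁻¹ * (Ff k * Gg (r-k))) := by
            ring
        _ = v⁻¹ * (Ff k * Gg (r-k)) := by rw [vvp, vvp]; ring
    rw [S1, S2, ih, pE]
    ring

lemma lemB : ∀ s : ℕ, ∑ t ∈ Finset.range (s+1), Tt t * Ee (s-t) = Ww s := by
  intro s
  induction s with
  | zero => simp [Tt, Ee, Ww, qfact, triN, wN]
  | succ s ih =>
    rw [Finset.sum_range_succ']
    have step : ∀ t ∈ Finset.range (s+1),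
        Tt (t+1) * Ee (s+1-(t+1)) = (v*(v-v⁻¹)) * (Tt t * Ee (s-t)) := by
      intro t ht
      have h1 : s+1-(t+1) = s-t := by omega
      have h2 : Tt (t+1) = v*(v-v⁻¹) * Tt t := by
        unfold Tt
        rw [pow_succ, pow_succ]
        ring
      rw [h1, h2]
      ring
    rw [Finset.sum_congr rfl step, ← Finset.mul_sum, ih]
    have h0 : Tt 0 * Ee (s+1-0) = Ee (s+1) := by
      unfold Tt
      norm_num
    rw [h0]
    exact pB s

lemma Crec (e : ℕ) : qint ((e:ℤ)+1) * ∑ n ∈ Finset.range (e+2), Hh n * Wpp (e+1-n)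
    = (v*(v⁻¹)^e - v^(e+1)) * ∑ n ∈ Finset.range (e+1), Hh n * Wpp (e-n) := by
  rw [Finset.mul_sum]
  have split : ∀ n ∈ Finset.range (e+2),
      qint ((e:ℤ)+1) * (Hh n * Wpp (e+1-n))
        = v^(e+1-n) * qint ((n:ℕ):ℤ) * Hh n * Wpp (e+1-n)
          + (v⁻¹)^n * qint (((e+1-n:ℕ)):ℤ) * Hh n * Wpp (e+1-n) := by
    intro n hn
    have hn' : n ≤ e+1 := by have := Finset.mem_range.mp hn; omega
    have hcast : ((e:ℤ)+1) = ((n:ℕ):ℤ) + (((e+1-n:ℕ)):ℤ) := by omega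
    rw [hcast, qadd]
    rw [vnat, show -((n:ℕ):ℤ) = -((n:ℕ):ℤ) from rfl, vneg]
    ring
  rw [Finset.sum_congr rfl split, Finset.sum_add_distrib]
  have S1 : ∑ n ∈ Finset.range (e+2), v^(e+1-n) * qint ((n:ℕ):ℤ) * Hh n * Wpp (e+1-n)
      = -(v^(e+1)) * ∑ n ∈ Finset.range (e+1), Hh n * Wpp (e-n) := by
    rw [Finset.sum_range_succ']
    have f0 : v^(e+1-0) * qint (((0:ℕ):ℕ):ℤ) * Hh 0 * Wpp (e+1-0) = 0 := by
      norm_num [qint_zero]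
    rw [f0, add_zero, Finset.mul_sum]
    apply Finset.sum_congr rfl
    intro n hn
    have hn' : n ≤ e := by have := Finset.mem_range.mp hn; omega
    have h1 : e+1-(n+1) = e-n := by omega
    have h2 : (((n:ℕ)+1:ℕ):ℤ) = ((n:ℕ):ℤ)+1 := by push_cast; ring
    rw [h1, h2]
    calc v^(e-n) * qint ((n:ℤ)+1) * Hh (n+1) * Wpp (e-n)
        = v^(e-n) * (qint ((n:ℤ)+1) * Hh (n+1)) * Wpp (e-n) := by ring
      _ = v^(e-n) * (-(v^(n+1)) * Hh n) * Wpp (e-n) := by rw [pH]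
      _ = -(v^(e-n) * v^(n+1)) * (Hh n * Wpp (e-n)) := by ring
      _ = -(v^(e+1)) * (Hh n * Wpp (e-n)) := by
          rw [← pow_add, show (e-n)+(n+1) = e+1 by omega]
  have S2 : ∑ n ∈ Finset.range (e+2), (v⁻¹)^n * qint (((e+1-n:ℕ)):ℤ) * Hh n * Wpp (e+1-n)
      = (v*(v⁻¹)^e) * ∑ n ∈ Finset.range (e+1), Hh n * Wpp (e-n) := by
    rw [Finset.sum_range_succ]
    have flast : (v⁻¹)^(e+1) * qint (((e+1-(e+1):ℕ)):ℤ) * Hh (e+1) * Wpp (e+1-(e+1)) = 0 := by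
      norm_num [qint_zero]
    rw [flast, add_zero, Finset.mul_sum]
    apply Finset.sum_congr rfl
    intro n hn
    have hn' : n ≤ e := by have := Finset.mem_range.mp hn; omega
    have h1 : e+1-n = (e-n)+1 := by omega
    have h2 : ((((e-n):ℕ)+1:ℕ):ℤ) = (((e-n):ℕ):ℤ)+1 := by push_cast; ring
    rw [h1, h2]
    calc (v⁻¹)^n * qint ((((e-n):ℕ):ℤ)+1) * Hh n * Wpp ((e-n)+1)
        = (v⁻¹)^n * (qint ((((e-n):ℕ):ℤ)+1) * Wpp ((e-n)+1)) * Hh n := by ring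
      _ = (v⁻¹)^n * (v * (v⁻¹)^(e-n) * Wpp (e-n)) * Hh n := by rw [pW]
      _ = v * ((v⁻¹)^n * (v⁻¹)^(e-n)) * (Hh n * Wpp (e-n)) := by ring
      _ = v*(v⁻¹)^e * (Hh n * Wpp (e-n)) := by
          rw [← pow_add, show n+(e-n) = e by omega]
  rw [S1, S2]
  ring

lemma lemC : ∀ d : ℕ, 1 ≤ d → ∑ n ∈ Finset.range (d+1), Hh n * Wpp (d-n) = 0 := by
  intro d
  induction d with
  | zero => omega
  | succ e ih =>
    intro _
    have hq : qint ((e:ℤ)+1) ≠ 0 := qint_ne_zero (by omega)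
    apply mul_left_cancel₀ hq
    rw [mul_zero, Crec]
    rcases Nat.eq_zero_or_pos e with he | he
    · subst he
      norm_num
    · rw [ih he, mul_zero]

lemma Gg_eq (m : ℕ) : Gg m = v^(m^2) * (v⁻¹)^(2*m) / qdfact m := by
  unfold Gg
  rw [inv_pow]
  ring

lemma vz (a b : ℕ) : v ^ ((a:ℤ) - (b:ℤ)) = v^a * v⁻¹^b := by
  rw [sub_eq_add_neg, zpow_add₀ hv, vnat, vneg]

lemma ptwise (d t k m n : ℕ) (hd : d = t+k+m+n) :
    (-1 : K) ^ n *
          v ^ ((t : ℤ) ^ 2 - 2 * (d : ℤ) * t + (t : ℤ)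
                + 2 * ((n : ℕ) : ℤ) * t
                + ((n * (n + 1) / 2 : ℕ) : ℤ)
                - 2 * (k : ℤ) * m - 2 * (m : ℤ)) *
          (v - v⁻¹) ^ t /
          (qfact n * qdfact k * qdfact m)
      = Tt t * ((v⁻¹)^((t+k+m)^2) * (Ff k * (Gg m * Hh n))) := by
  have hE : (t : ℤ)^2 - 2*(d:ℤ)*t + t + 2*((n:ℕ):ℤ)*t + ((n*(n+1)/2 : ℕ):ℤ)
        - 2*(k:ℤ)*m - 2*(m:ℤ)
      = (((t + k^2 + m^2 + n*(n+1)/2 : ℕ)):ℤ) - (((t+k+m)^2 + 2*m : ℕ):ℤ) := by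
    subst hd; push_cast; ring
  rw [hE, vz, Gg_eq]
  unfold Tt Ff Hh tribN
  ring

theorem stmt3 (d : ℕ) (hd : 1 ≤ d) :
    ∑ t ∈ Finset.range (d + 1), ∑ k ∈ Finset.range (d + 1 - t),
      ∑ m ∈ Finset.range (d + 1 - t - k),
        (-1 : K) ^ (d - t - k - m) *
          v ^ ((t : ℤ) ^ 2 - 2 * (d : ℤ) * t + (t : ℤ)
                + 2 * ((d - t - k - m : ℕ) : ℤ) * t
                + (((d - t - k - m) * (d - t - k - m + 1) / 2 : ℕ) : ℤ)
                - 2 * (k : ℤ) * m - 2 * (m : ℤ)) *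
          (v - v⁻¹) ^ t /
          (qfact (d - t - k - m) * qdfact k * qdfact m)
    = 0 := by
  have step0 : ∑ t ∈ Finset.range (d + 1), ∑ k ∈ Finset.range (d + 1 - t),
      ∑ m ∈ Finset.range (d + 1 - t - k),
        (-1 : K) ^ (d - t - k - m) *
          v ^ ((t : ℤ) ^ 2 - 2 * (d : ℤ) * t + (t : ℤ)
                + 2 * ((d - t - k - m : ℕ) : ℤ) * t
                + (((d - t - k - m) * (d - t - k - m + 1) / 2 : ℕ) : ℤ)
                - 2 * (k : ℤ) * m - 2 * (m : ℤ)) *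
          (v - v⁻¹) ^ t /
          (qfact (d - t - k - m) * qdfact k * qdfact m)
      = ∑ t ∈ Finset.range (d+1), ∑ k ∈ Finset.range ((d-t)+1),
          ∑ m ∈ Finset.range ((d-t)+1-k),
            Tt t * ((v⁻¹)^((t+k+m)^2) * (Ff k * (Gg m * Hh (d-t-k-m)))) := by
    apply Finset.sum_congr rfl
    intro t ht
    have ht' : t ≤ d := by have := Finset.mem_range.mp ht; omega
    rw [show d+1-t = (d-t)+1 by omega]
    apply Finset.sum_congr rfl
    intro k hk
    have hk' : k ≤ d - t := by have := Finset.mem_range.mp hk; omega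
    apply Finset.sum_congr rfl
    intro m hm
    have hm' : m ≤ d-t-k := by have := Finset.mem_range.mp hm; omega
    exact ptwise d t k m (d-t-k-m) (by omega)
  rw [step0]
  have step1 : ∑ t ∈ Finset.range (d+1), ∑ k ∈ Finset.range ((d-t)+1),
        ∑ m ∈ Finset.range ((d-t)+1-k),
          Tt t * ((v⁻¹)^((t+k+m)^2) * (Ff k * (Gg m * Hh (d-t-k-m))))
      = ∑ t ∈ Finset.range (d+1), ∑ r ∈ Finset.range (d+1-t),
          Tt t * ((v⁻¹)^((t+r)^2) * (Hh (d-t-r) * Ee r)) := by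
    apply Finset.sum_congr rfl
    intro t ht
    have ht' : t ≤ d := by have := Finset.mem_range.mp ht; omega
    rw [show d+1-t = (d-t)+1 by omega]
    rw [tri_reindex (fun k m => Tt t * ((v⁻¹)^((t+k+m)^2) * (Ff k * (Gg m * Hh (d-t-k-m))))) (d-t)]
    apply Finset.sum_congr rfl
    intro r hr
    have hr' : r ≤ d-t := by have := Finset.mem_range.mp hr; omega
    have inner : ∀ k ∈ Finset.range (r+1),
        Tt t * ((v⁻¹)^((t+k+(r-k))^2) * (Ff k * (Gg (r-k) * Hh (d-t-k-(r-k)))))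
          = (Tt t * ((v⁻¹)^((t+r)^2) * Hh (d-t-r))) * (Ff k * Gg (r-k)) := by
      intro k hk
      have hk' : k ≤ r := by have := Finset.mem_range.mp hk; omega
      rw [show t+k+(r-k) = t+r by omega, show d-t-k-(r-k) = d-t-r by omega]
      ring
    rw [Finset.sum_congr rfl inner, ← Finset.mul_sum, lemA r]
    ring
  rw [step1]
  rw [tri_reindex (fun t r => Tt t * ((v⁻¹)^((t+r)^2) * (Hh (d-t-r) * Ee r))) d]
  have step2 : ∀ s ∈ Finset.range (d+1),
      ∑ t ∈ Finset.range (s+1),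
        Tt t * ((v⁻¹)^((t+(s-t))^2) * (Hh (d-t-(s-t)) * Ee (s-t)))
        = Hh (d-s) * Wpp s := by
    intro s hs
    have inner : ∀ t ∈ Finset.range (s+1),
        Tt t * ((v⁻¹)^((t+(s-t))^2) * (Hh (d-t-(s-t)) * Ee (s-t)))
          = ((v⁻¹)^(s^2) * Hh (d-s)) * (Tt t * Ee (s-t)) := by
      intro t ht
      have ht' : t ≤ s := by have := Finset.mem_range.mp ht; omega
      rw [show t+(s-t) = s by omega, show d-t-(s-t) = d-s by omega]
      ring
    rw [Finset.sum_congr rfl inner, ← Finset.mul_sum, lemB s, Wpp_eq]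
    ring
  rw [Finset.sum_congr rfl step2]
  have step3 : ∑ s ∈ Finset.range (d+1), Hh (d-s) * Wpp s
      = ∑ n ∈ Finset.range (d+1), Hh n * Wpp (d-n) := by
    rw [← Finset.sum_range_reflect (fun s => Hh (d-s) * Wpp s) (d+1)]
    apply Finset.sum_congr rfl
    intro j hj
    have hj' : j ≤ d := by have := Finset.mem_range.mp hj; omega
    rw [show d+1-1-j = d-j by omega, show d-(d-j) = j by omega]
  rw [step3]
  exact lemC d hd
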